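/- (Kolmogorov extension theorem for type A spaces) Let Y be a nonempty set and {F_n}_{n≥0} an increasing sequence of countably generated σ-algebras on Y; put F = σ(⋃_{n≥0} F_n). Assume each (Y,F_n) is a type A space and that F is the inverse limit of {F_n}_{n≥0}, i.e., whenever {A_n}_{n≥0} is a decreasing sequence of sets with A_n an atom of F_n for each n, then ⋂_{n≥0} A_n ≠ ∅. Then (Y,F) is a type A space and {F_n}_{n≥0} has the Kolmogorov extension property: for every sequence {μ_n}_{n≥0} with μ_n a probability measure on (Y,F_n) satisfying μ_{n+1}(F') = μ_n(F') for all F' ∈ F_n and all n ≥ 0, there exists a probability measure μ on (Y,F) with μ(F') = μ_n(F') for all F' ∈ F_n and all n ≥ 0. -/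

import Mathlib

open MeasureTheory
open scoped ENNReal

instance polishNatBool : PolishSpace (ℕ → Bool) :=
  @instPolishSpaceOfSeparableSpaceOfIsCompletelyMetrizableSpace _ _ inferInstance inferInstance

instance polishNatNatBool : PolishSpace (ℕ → ℕ → Bool) :=
  @instPolishSpaceOfSeparableSpaceOfIsCompletelyMetrizableSpace _ _ inferInstance inferInstance

/-- A map `f : (X,mX) → (Y,mY)` between measurable spaces is *exactly measurable* if
`f⁻¹(mY) = mX`. -/
def ExactlyMeasurable' {X Y : Type*} (mX : MeasurableSpace X) (mY : MeasurableSpace Y)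
    (f : X → Y) : Prop :=
  MeasurableSpace.comap f mY = mX

/-- A countably generated measurable space `(X,mX)` is a *type A space* if there is an
exactly measurable map into the Cantor space whose range is analytic. -/
def IsTypeA' {X : Type*} (mX : MeasurableSpace X) : Prop :=
  @MeasurableSpace.CountablyGenerated X mX ∧
    ∃ f : X → (ℕ → Bool), ExactlyMeasurable' mX inferInstance f ∧
      MeasureTheory.AnalyticSet (Set.range f)

/-- The atom of a σ-algebra `m` containing a point `y`: the intersection of all
`m`-measurable sets containing `y`. -/
def atomOf {Y : Type*} (m : MeasurableSpace Y) (y : Y) : Set Y :=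
  ⋂₀ {s : Set Y | MeasurableSet[m] s ∧ y ∈ s}

section Auxiliary

open Set Filter Topology
open scoped ENNReal

lemma auxGeom (ε : ℝ≥0∞) : ∀ n, (∑ i ∈ Finset.range n, ε / 2^(i+1)) + ε / 2^n ≤ ε := by
  intro n
  induction n with
  | zero => simp
  | succ n ih =>
    rw [Finset.sum_range_succ]
    calc (∑ i ∈ Finset.range n, ε / 2^(i+1)) + ε / 2^(n+1) + ε / 2^(n+1)
        = (∑ i ∈ Finset.range n, ε / 2^(i+1)) + (ε / 2^(n+1) + ε / 2^(n+1)) := by ring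
      _ = (∑ i ∈ Finset.range n, ε / 2^(i+1)) + ε / 2^n := by
          congr 1
          rw [ENNReal.div_add_div_same, ← two_mul, pow_succ, mul_comm (2^n) 2,
            ENNReal.mul_div_mul_left _ _ (by norm_num) (by norm_num)]
      _ ≤ ε := ih

lemma auxGeom' (ε : ℝ≥0∞) (n : ℕ) : (∑ i ∈ Finset.range n, ε / 2^(i+1)) ≤ ε :=
  le_trans (le_add_right le_rfl) (auxGeom ε n)

lemma auxGeom2 (ε : ℝ≥0∞) (n : ℕ) : (∑ i ∈ Finset.range n, ε / 2^(i+2)) ≤ ε / 2 := by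
  have h := auxGeom' (ε / 2) n
  have he : ∀ i : ℕ, ε / 2 / 2^(i+1) = ε / 2^(i+2) := by
    intro i
    rw [div_eq_mul_inv, div_eq_mul_inv, div_eq_mul_inv, mul_assoc,
      ← ENNReal.mul_inv (Or.inl (by norm_num)) (Or.inl (by norm_num)), ← pow_succ']
  calc (∑ i ∈ Finset.range n, ε / 2^(i+2)) = ∑ i ∈ Finset.range n, ε / 2 / 2^(i+1) :=
        Finset.sum_congr rfl fun i _ => (he i).symm
    _ ≤ ε / 2 := h

lemma map_measure_inter_range {α β : Type*} [MeasurableSpace α] [MeasurableSpace β]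
    (μ : Measure α) {g : α → β} (hg : Measurable g) {E : Set β} (hE : MeasurableSet E) :
    (μ.map g) (E ∩ Set.range g) = (μ.map g) E := by
  refine le_antisymm (measure_mono inter_subset_left) ?_
  set H := toMeasurable (μ.map g) (E ∩ Set.range g) with hH
  have h0 : (μ.map g) (E \ H) = 0 := by
    rw [Measure.map_apply hg (hE.diff (measurableSet_toMeasurable _ _))]
    have : g ⁻¹' (E \ H) = ∅ := by
      ext x
      simp only [mem_preimage, mem_diff, mem_empty_iff_false, iff_false, not_and, not_not]
      intro hxE
      exact subset_toMeasurable _ _ ⟨hxE, mem_range_self x⟩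
    rw [this]; simp
  calc (μ.map g) E ≤ (μ.map g) (E ∩ H) + (μ.map g) (E \ H) :=
        measure_le_inter_add_diff _ _ _
    _ ≤ (μ.map g) H + 0 := add_le_add (measure_mono inter_subset_right) h0.le
    _ = (μ.map g) (E ∩ Set.range g) := by rw [add_zero, hH, measure_toMeasurable]

lemma atomOf_comap {Y X : Type*} [m : MeasurableSpace X] [MeasurableSingletonClass X]
    (f : Y → X) (z : Y) :
    atomOf (m.comap f) z = f ⁻¹' {f z} := by
  apply subset_antisymm
  · exact sInter_subset_of_mem ⟨⟨{f z}, MeasurableSet.singleton _, rfl⟩, rfl⟩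
  · rintro y hy s ⟨⟨B, hB, rfl⟩, hz⟩
    have : f y = f z := hy
    simpa [this] using hz

lemma doobDynkin_digits {Y : Type*} {f g : Y → (ℕ → Bool)}
    (h : MeasurableSpace.comap f inferInstance ≤ MeasurableSpace.comap g inferInstance) :
    ∃ ψ : (ℕ → Bool) → (ℕ → Bool), Measurable ψ ∧ f = ψ ∘ g := by
  classical
  have hmem : ∀ i : ℕ, ∃ B : Set (ℕ → Bool), MeasurableSet B ∧
      g ⁻¹' B = f ⁻¹' {x | x i = true} := by
    intro i
    have : MeasurableSet[MeasurableSpace.comap g inferInstance] (f ⁻¹' {x | x i = true}) := by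
      apply h
      refine ⟨{x | x i = true}, ?_, rfl⟩
      have hm : MeasurableSet ((fun x : ℕ → Bool => x i) ⁻¹' {true}) :=
        measurable_pi_apply i (measurableSet_singleton true)
      convert hm using 1; ext x; simp
    exact MeasurableSpace.measurableSet_comap.mp this
  choose B hBmeas hBeq using hmem
  refine ⟨fun m i => if m ∈ B i then true else false, ?_, ?_⟩
  · apply measurable_pi_lambda
    intro i
    exact Measurable.ite (hBmeas i) measurable_const measurable_const
  · funext y
    funext i
    have : (g y ∈ B i) ↔ f y i = true := by
      constructor
      · intro hg
        have : y ∈ g ⁻¹' B i := hg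
        rw [hBeq i] at this; exact this
      · intro hf
        have : y ∈ f ⁻¹' {x | x i = true} := hf
        rw [← hBeq i] at this; exact this
    simp only [Function.comp_apply]
    by_cases hc : g y ∈ B i
    · simp [hc, (this.mp hc).symm]
    · simp only [hc, if_false]
      cases hfy : f y i
      · rfl
      · exact absurd (this.mpr hfy) hc

lemma not_countable_cantor2 : ¬ Countable (ℕ → ℕ → Bool) := by
  intro hc
  have h2 : Countable (ℕ → Bool) :=
    Function.Injective.countable (f := fun (x : ℕ → Bool) => fun n (_ : ℕ) => x n)
      (fun a b hab => by funext n; exact congrFun (congrFun hab n) 0)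
  obtain ⟨F, hF⟩ := exists_surjective_nat (ℕ → Bool)
  obtain ⟨n, hn⟩ := hF (fun k => ! F k k)
  have := congrFun hn n
  simp at this

lemma analytic_inner_compact {X : Type*} [TopologicalSpace X] [PolishSpace X]
    [MeasurableSpace X] [BorelSpace X] (μ : Measure X) [IsFiniteMeasure μ]
    {A : Set X} (hA : AnalyticSet A) {ε : ℝ≥0∞} (hε : 0 < ε) :
    ∃ K, K ⊆ A ∧ IsCompact K ∧ μ A ≤ μ K + ε := by
  rw [AnalyticSet] at hA
  rcases hA with rfl | ⟨τ, τcont, rfl⟩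
  · exact ⟨∅, Subset.rfl, isCompact_empty, by simp⟩
  set A := range τ with hAdef
  -- basic objects
  set T : (ℕ → ℕ) → ℕ → Set (ℕ → ℕ) := fun c m => {x | ∀ i, i < m → x i ≤ c i} with hT
  set Sf : (ℕ → ℕ) → ℕ → Set X := fun c m => τ '' (T c m) with hSf
  -- step: choose a bound for the next coordinate
  have step : ∀ (c : ℕ → ℕ) (m : ℕ), ∃ j : ℕ,
      μ (Sf c m) ≤ μ (Sf (Function.update c m j) (m+1)) + ε / 2^(m+1) := by
    intro c m
    have hUnion : (⋃ j : ℕ, T (Function.update c m j) (m+1)) = T c m := by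
      ext x
      simp only [mem_iUnion, hT, mem_setOf_eq]
      constructor
      · rintro ⟨j, hj⟩ i him
        have := hj i (Nat.lt_succ_of_lt him)
        rwa [Function.update_of_ne (Nat.ne_of_lt him) j c] at this
      · intro hx
        refine ⟨x m, fun i hi => ?_⟩
        rcases Nat.lt_succ_iff_lt_or_eq.mp hi with hi' | rfl
        · rw [Function.update_of_ne (Nat.ne_of_lt hi') _ _]; exact hx i hi'
        · rw [Function.update_self]
    have hmono : Monotone (fun j => Sf (Function.update c m j) (m+1)) := by
      intro j j' hjj
      apply Set.image_mono
      intro x hx i hi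
      refine le_trans (hx i hi) ?_
      rcases eq_or_ne i m with rfl | hne
      · simp only [Function.update_self]; exact hjj
      · simp [Function.update_of_ne hne]
    have hsup : μ (Sf c m) = ⨆ j : ℕ, μ (Sf (Function.update c m j) (m+1)) := by
      rw [hSf]
      simp only
      rw [← hUnion, image_iUnion]
      exact (hmono.directed_le).measure_iUnion
    rcases eq_or_ne (μ (Sf c m)) 0 with h0 | h0
    · exact ⟨0, by rw [h0]; exact zero_le⟩
    have hδ : ε / 2^(m+1) ≠ 0 := by
      rw [Ne, ENNReal.div_eq_zero_iff]
      push_neg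
      exact ⟨hε.ne', ENNReal.pow_ne_top (by norm_num)⟩
    have hlt : μ (Sf c m) - ε / 2^(m+1) < μ (Sf c m) :=
      ENNReal.sub_lt_self (measure_ne_top μ _) h0 hδ
    have hlt2 : μ (Sf c m) - ε / 2^(m+1) < ⨆ j : ℕ, μ (Sf (Function.update c m j) (m+1)) := by
      rw [← hsup]; exact hlt
    rcases lt_iSup_iff.mp hlt2 with ⟨j, hj⟩
    exact ⟨j, tsub_le_iff_right.mp hj.le⟩
  -- iterate
  classical
  let next : (ℕ → ℕ) × ℕ → (ℕ → ℕ) × ℕ := fun p =>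
    (Function.update p.1 p.2 (step p.1 p.2).choose, p.2 + 1)
  let c : ℕ → (ℕ → ℕ) × ℕ := fun m => next^[m] (fun _ => 0, 0)
  have hc2 : ∀ m, (c m).2 = m := by
    intro m
    induction m with
    | zero => rfl
    | succ m ih => rw [show c (m+1) = next (c m) from Function.iterate_succ_apply' _ _ _]; simp [next, ih]
  have hcsucc : ∀ m, c (m+1) = (Function.update (c m).1 m (step (c m).1 m).choose, m + 1) := by
    intro m
    rw [show c (m+1) = next (c m) from Function.iterate_succ_apply' _ _ _]
    simp only [next, hc2 m]
  set b : ℕ → ℕ := fun i => (c (i+1)).1 i with hb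
  have hstab : ∀ m i, i < m → (c m).1 i = b i := by
    intro m
    induction m with
    | zero => intro i hi; omega
    | succ m ih =>
      intro i hi
      rcases Nat.lt_succ_iff_lt_or_eq.mp hi with hi' | rfl
      · rw [hcsucc m]
        simp only [Function.update_of_ne (Nat.ne_of_lt hi')]
        exact ih i hi'
      · rfl
  have hTb : ∀ m, T (c m).1 m = T b m := by
    intro m
    ext x
    constructor <;> intro hx i hi
    · rw [← hstab m i hi]; exact hx i hi
    · rw [hstab m i hi]; exact hx i hi
  have hInv : ∀ m, μ A ≤ μ (Sf b m) + ∑ i ∈ Finset.range m, ε / 2^(i+1) := by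
    intro m
    induction m with
    | zero =>
      simp only [Finset.range_zero, Finset.sum_empty, add_zero]
      apply measure_mono
      rw [hSf, hAdef]
      simp only
      intro y hy
      rcases hy with ⟨x, rfl⟩
      exact ⟨x, fun i hi => absurd hi (Nat.not_lt_zero i), rfl⟩
    | succ m ih =>
      have h1 := (step (c m).1 m).choose_spec
      have e1 : Sf (c m).1 m = Sf b m := by
        show τ '' T (c m).1 m = τ '' T b m
        rw [hTb m]
      have e2 : Sf (Function.update (c m).1 m (step (c m).1 m).choose) (m+1)
          = Sf b (m+1) := by
        have : Function.update (c m).1 m (step (c m).1 m).choose = (c (m+1)).1 := by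
          rw [hcsucc m]
        rw [this]
        show τ '' T (c (m+1)).1 (m+1) = τ '' T b (m+1)
        rw [hTb (m+1)]
      have h1' : μ (Sf b m) ≤ μ (Sf b (m+1)) + ε / 2^(m+1) := by
        rw [← e1, ← e2]; exact h1
      calc μ A ≤ μ (Sf b m) + ∑ i ∈ Finset.range m, ε / 2^(i+1) := ih
        _ ≤ (μ (Sf b (m+1)) + ε / 2^(m+1)) + ∑ i ∈ Finset.range m, ε / 2^(i+1) :=
            add_le_add_left h1' _
        _ = μ (Sf b (m+1)) + ∑ i ∈ Finset.range (m+1), ε / 2^(i+1) := by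
            rw [Finset.sum_range_succ]; ring
  -- the compact set
  set C : Set (ℕ → ℕ) := Set.pi univ (fun i => Iic (b i)) with hC
  have hCcomp : IsCompact C := isCompact_univ_pi (fun i => (Set.finite_Iic (b i)).isCompact)
  set K : Set X := τ '' C with hK
  have hKcomp : IsCompact K := hCcomp.image τcont
  have hKA : K ⊆ A := by
    rw [hK, hAdef]
    exact image_subset_range τ C
  -- the limit argument: ⋂ closures of Sf b m is contained in K
  have hsub : (⋂ m, closure (Sf b m)) ⊆ K := by
    intro y hy
    simp only [mem_iInter] at hy
    -- antitone basis of neighborhoods of y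
    obtain ⟨U, hU⟩ := (𝓝 y).exists_antitone_basis
    have hchoice : ∀ m : ℕ, ∃ x, x ∈ T b m ∧ τ x ∈ U m := by
      intro m
      have h1 : U m ∩ Sf b m ≠ ∅ := by
        have := mem_closure_iff_nhds.mp (hy m) (U m) (hU.mem m)
        rwa [← nonempty_iff_ne_empty]
      rcases nonempty_iff_ne_empty.mpr h1 with ⟨z, hz1, hz2⟩
      rcases hz2 with ⟨x, hx, rfl⟩
      exact ⟨x, hx, hz1⟩
    choose x hxT hxU using hchoice
    -- truncated sequence lies in the compact set C
    set x' : ℕ → (ℕ → ℕ) := fun m i => min (x m i) (b i) with hx'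
    have hx'C : ∀ m, x' m ∈ C := by
      intro m
      simp only [hC, Set.mem_univ_pi, Set.mem_Iic]
      intro i
      exact min_le_right _ _
    obtain ⟨a, haC, φ, hφ, hconv⟩ := hCcomp.tendsto_subseq hx'C
    -- the original subsequence converges to the same limit
    have hconv2 : Filter.Tendsto (fun n => x (φ n)) Filter.atTop (𝓝 a) := by
      rw [tendsto_pi_nhds]
      intro i
      have hcoord : Filter.Tendsto (fun n => x' (φ n) i) Filter.atTop (𝓝 (a i)) :=
        (tendsto_pi_nhds.mp hconv) i
      apply hcoord.congr'
      filter_upwards [Filter.eventually_ge_atTop (i+1)] with n hn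
      have hlt : i < φ n := lt_of_lt_of_le (Nat.lt_of_lt_of_le (Nat.lt_succ_self i) hn) (hφ.le_apply)
      have := hxT (φ n) i hlt
      simp only [hx', min_eq_left this]
    have hτconv : Filter.Tendsto (fun n => τ (x (φ n))) Filter.atTop (𝓝 (τ a)) :=
      (τcont.tendsto a).comp hconv2
    have hτconv2 : Filter.Tendsto (fun n => τ (x (φ n))) Filter.atTop (𝓝 y) := by
      apply hU.tendsto
      intro n
      exact hU.antitone (hφ.le_apply) (hxU (φ n))
    have : τ a = y := tendsto_nhds_unique hτconv hτconv2
    rw [← this]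
    exact ⟨a, haC, rfl⟩
  -- conclude
  refine ⟨K, hKA, hKcomp, ?_⟩
  have hanti : Antitone (fun m => closure (Sf b m)) := by
    intro m m' hmm'
    apply closure_mono
    apply Set.image_mono
    intro z hz i hi
    exact hz i (lt_of_lt_of_le hi hmm')
  have hiInter : μ (⋂ m, closure (Sf b m)) = ⨅ m, μ (closure (Sf b m)) :=
    hanti.measure_iInter (fun m => isClosed_closure.nullMeasurableSet)
      ⟨0, measure_ne_top μ _⟩
  calc μ A ≤ ⨅ m, (μ (closure (Sf b m)) + ε) := by
        refine le_iInf fun m => ?_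
        calc μ A ≤ μ (Sf b m) + ∑ i ∈ Finset.range m, ε / 2^(i+1) := hInv m
          _ ≤ μ (closure (Sf b m)) + ε :=
            add_le_add (measure_mono subset_closure) (auxGeom' ε m)
    _ = (⨅ m, μ (closure (Sf b m))) + ε := by
        rw [ENNReal.iInf_add]
    _ = μ (⋂ m, closure (Sf b m)) + ε := by rw [hiInter]
    _ ≤ μ K + ε := add_le_add_left (measure_mono hsub) ε


lemma analyticSet_inter {X : Type*} [TopologicalSpace X] [T2Space X]
    {u v : Set X} (hu : AnalyticSet u) (hv : AnalyticSet v) : AnalyticSet (u ∩ v) := by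
  have : u ∩ v = ⋂ b : Bool, cond b u v := by
    ext x; simp [Bool.forall_bool, and_comm]
  rw [this]
  exact AnalyticSet.iInter (fun b => by cases b <;> simpa)

/-- Chain of compositions of the Doob–Dynkin factor maps. -/
def chainM (ψ : ℕ → (ℕ → Bool) → (ℕ → Bool)) (i : ℕ) : ℕ → (ℕ → Bool) → (ℕ → Bool)
  | 0 => id
  | (j+1) => chainM ψ i j ∘ ψ (i + j)

lemma chainM_measurable (ψ : ℕ → (ℕ → Bool) → (ℕ → Bool)) (hψ : ∀ n, Measurable (ψ n))
    (i : ℕ) : ∀ j, Measurable (chainM ψ i j)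
  | 0 => measurable_id
  | (j+1) => (chainM_measurable ψ hψ i j).comp (hψ (i + j))

lemma chainM_spec {Y : Type*} (f : ℕ → Y → (ℕ → Bool)) (ψ : ℕ → (ℕ → Bool) → (ℕ → Bool))
    (hψ : ∀ n, f n = ψ n ∘ f (n+1)) (i : ℕ) : ∀ j, f i = chainM ψ i j ∘ f (i + j)
  | 0 => rfl
  | (j+1) => by
    have h1 := chainM_spec f ψ hψ i j
    have h2 := hψ (i + j)
    funext y
    calc f i y = chainM ψ i j (f (i+j) y) := congrFun h1 y
      _ = chainM ψ i j ((ψ (i+j) ∘ f (i+j+1)) y) := by rw [← h2]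
      _ = chainM ψ i (j+1) (f (i + (j+1)) y) := rfl

end Auxiliary

open Set

theorem stmt12 {Y : Type*} [Nonempty Y]
    (𝓕 : ℕ → MeasurableSpace Y) (hmono : Monotone 𝓕)
    (hcg : ∀ n, @MeasurableSpace.CountablyGenerated Y (𝓕 n))
    (hA : ∀ n, IsTypeA' (𝓕 n))
    (hlim : ∀ A : ℕ → Set Y, Antitone A →
      (∀ n, ∃ y : Y, A n = atomOf (𝓕 n) y) → (⋂ n, A n).Nonempty) :
    IsTypeA' (⨆ n, 𝓕 n) ∧
      ∀ μn : (n : ℕ) → @Measure Y (𝓕 n),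
        (∀ n, @IsProbabilityMeasure Y (𝓕 n) (μn n)) →
        (∀ n, ∀ s : Set Y, MeasurableSet[𝓕 n] s → μn (n + 1) s = μn n s) →
        ∃ μ : @Measure Y (⨆ n, 𝓕 n),
          @IsProbabilityMeasure Y (⨆ n, 𝓕 n) μ ∧
            ∀ n, ∀ s : Set Y, MeasurableSet[𝓕 n] s → μ s = μn n s := by
  classical
  -- the exactly measurable maps into Cantor space
  have hfex : ∀ n, ∃ f : Y → (ℕ → Bool),
      MeasurableSpace.comap f inferInstance = 𝓕 n ∧ AnalyticSet (Set.range f) :=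
    fun n => (hA n).2
  choose f hfE hfr using hfex
  -- Doob–Dynkin consecutive factorizations
  have hψex : ∀ n, ∃ ψ : (ℕ → Bool) → (ℕ → Bool), Measurable ψ ∧ f n = ψ ∘ f (n+1) := by
    intro n
    apply doobDynkin_digits
    rw [hfE n, hfE (n+1)]
    exact hmono (Nat.le_succ n)
  choose ψ hψm hψe using hψex
  -- the finite joint maps
  set H : (n : ℕ) → Y → (Fin (n+1) → (ℕ → Bool)) := fun n y i => f i y with hH
  have hHmeas : ∀ n, Measurable[𝓕 n] (H n) := by
    intro n
    have hcoord : ∀ i : Fin (n+1), Measurable[𝓕 n] (fun y => H n y i) := by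
      intro i
      have : Measurable[𝓕 n] (f i) := by
        rw [measurable_iff_comap_le, hfE i]
        exact hmono (Nat.lt_succ_iff.mp i.isLt)
      exact this
    exact @measurable_pi_lambda Y (Fin (n+1)) (fun _ => ℕ → Bool) (𝓕 n) (fun _ => inferInstance) (H n) hcoord
  -- ranges of the joint maps are analytic
  set R : (n : ℕ) → Set (Fin (n+1) → (ℕ → Bool)) := fun n => Set.range (H n) with hR
  have hRana : ∀ n, AnalyticSet (R n) := by
    intro n
    set Fn : (ℕ → Bool) → (Fin (n+1) → (ℕ → Bool)) :=
      fun m i => chainM ψ i (n - i) m with hFn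
    have hFnm : Measurable Fn := by
      apply measurable_pi_lambda
      intro i
      exact chainM_measurable ψ hψm i (n - i)
    have hHF : H n = Fn ∘ f n := by
      funext y i
      have h1 := congrFun (chainM_spec f ψ hψe i (n - ↑i)) y
      have h2 : (i : ℕ) + (n - i) = n := Nat.add_sub_cancel' (Nat.lt_succ_iff.mp i.isLt)
      rw [h2] at h1
      exact h1
    obtain ⟨β, tβ, pβ, τ, τcont, hτr⟩ :=
      MeasureTheory.analyticSet_iff_exists_polishSpace_range.mp (hfr n)
    letI : MeasurableSpace β := borel β
    haveI : BorelSpace β := ⟨rfl⟩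
    have : R n = Set.range (Fn ∘ τ) := by
      rw [hR]
      simp only
      rw [hHF, Set.range_comp, Set.range_comp, hτr]
    rw [this, ← Set.image_univ]
    exact MeasurableSet.univ.analyticSet_image (hFnm.comp τcont.measurable)
  -- the lifting lemma: coherent prefixes come from a point of Y
  have hlift : ∀ ω : ℕ → (ℕ → Bool), (∀ n, ∃ z, ∀ i : Fin (n+1), f i z = ω i) →
      ∃ y, ∀ n, f n y = ω n := by
    intro ω hω
    choose z hz using hω
    set A : ℕ → Set Y := fun n => f n ⁻¹' {ω n} with hAdef
    have hatom : ∀ n, A n = atomOf (𝓕 n) (z n) := by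
      intro n
      rw [← hfE n, atomOf_comap]
      have : f n (z n) = ω n := hz n ⟨n, Nat.lt_succ_self n⟩
      rw [this]
    have hanti : Antitone A := by
      apply antitone_nat_of_succ_le
      intro n y' hy'
      have h1 : f (n+1) y' = ω (n+1) := hy'
      have h2 : f n y' = ψ n (f (n+1) y') := congrFun (hψe n) y'
      have h3 : f n (z (n+1)) = ψ n (f (n+1) (z (n+1))) := congrFun (hψe n) (z (n+1))
      have h4 : f (n+1) (z (n+1)) = ω (n+1) := hz (n+1) ⟨n+1, Nat.lt_succ_self (n+1)⟩
      have h5 : f n (z (n+1)) = ω n := hz (n+1) ⟨n, Nat.lt_succ_of_lt (Nat.lt_succ_self n)⟩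
      have : f n y' = ω n := by rw [h2, h1, ← h4, ← h3, h5]
      exact this
    obtain ⟨y, hy⟩ := hlim A hanti (fun n => ⟨z n, hatom n⟩)
    simp only [Set.mem_iInter] at hy
    exact ⟨y, fun n => hy n⟩
  -- the full joint map into the countable product
  set g : Y → (ℕ → ℕ → Bool) := fun y k => f k y with hg
  have hgcomap : MeasurableSpace.comap g inferInstance = ⨆ n, 𝓕 n := by
    have : (inferInstance : MeasurableSpace (ℕ → ℕ → Bool)) =
        ⨆ k, MeasurableSpace.comap (fun ω : ℕ → ℕ → Bool => ω k) inferInstance := rfl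
    rw [this, MeasurableSpace.comap_iSup]
    congr 1
    funext k
    rw [MeasurableSpace.comap_comp]
    have : (fun ω : ℕ → ℕ → Bool => ω k) ∘ g = f k := rfl
    rw [this, hfE k]
  -- the range of g
  set π : (n : ℕ) → (ℕ → ℕ → Bool) → (Fin (n+1) → (ℕ → Bool)) :=
    fun n ω i => ω i with hπ
  have hπcont : ∀ n, Continuous (π n) :=
    fun n => continuous_pi (fun i => continuous_apply (i : ℕ))
  have hrange : Set.range g = ⋂ n, (π n) ⁻¹' (R n) := by
    apply subset_antisymm
    · rintro _ ⟨y, rfl⟩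
      apply Set.mem_iInter.mpr
      intro n
      exact ⟨y, rfl⟩
    · intro ω hω
      have hω' : ∀ n, ∃ z, ∀ i : Fin (n+1), f i z = ω i := by
        intro n
        obtain ⟨z, hz⟩ := Set.mem_iInter.mp hω n
        exact ⟨z, fun i => congrFun hz i⟩
      obtain ⟨y, hy⟩ := hlift ω hω'
      exact ⟨y, funext hy⟩
  have hSana : AnalyticSet (Set.range g) := by
    rw [hrange]
    exact AnalyticSet.iInter (fun n => (hRana n).preimage (hπcont n))
  -- compose with a Borel isomorphism to the Cantor space
  set e : (ℕ → ℕ → Bool) ≃ᵐ (ℕ → Bool) :=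
    PolishSpace.measurableEquivNatBoolOfNotCountable not_countable_cantor2 with he
  have hecomap : MeasurableSpace.comap e inferInstance =
      (inferInstance : MeasurableSpace (ℕ → ℕ → Bool)) := by
    apply le_antisymm
    · rw [← measurable_iff_comap_le]; exact e.measurable
    · have h1 : MeasurableSpace.comap e.symm
          (inferInstance : MeasurableSpace (ℕ → ℕ → Bool)) ≤
          (inferInstance : MeasurableSpace (ℕ → Bool)) := by
        rw [← measurable_iff_comap_le]; exact e.symm.measurable
      calc (inferInstance : MeasurableSpace (ℕ → ℕ → Bool))
          = MeasurableSpace.comap e (MeasurableSpace.comap e.symm inferInstance) := by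
            rw [MeasurableSpace.comap_comp]
            have : (e.symm ∘ e : (ℕ → ℕ → Bool) → (ℕ → ℕ → Bool)) = id := by
              funext x; exact e.symm_apply_apply x
            rw [this, MeasurableSpace.comap_id]
        _ ≤ MeasurableSpace.comap e inferInstance := MeasurableSpace.comap_mono h1
  have hf0comap : MeasurableSpace.comap (fun y => e (g y)) inferInstance = ⨆ n, 𝓕 n := by
    rw [← hgcomap]
    have hco : (fun y => e (g y)) = (⇑e) ∘ g := rfl
    rw [hco, ← MeasurableSpace.comap_comp, hecomap]
  have hf0range : AnalyticSet (Set.range (fun y => e (g y))) := by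
    obtain ⟨β, tβ, pβ, σ, σcont, hσr⟩ :=
      MeasureTheory.analyticSet_iff_exists_polishSpace_range.mp hSana
    letI : MeasurableSpace β := borel β
    haveI : BorelSpace β := ⟨rfl⟩
    have : Set.range (fun y => e (g y)) = Set.range (fun b => e (σ b)) := by
      rw [show (fun y => e (g y)) = (⇑e) ∘ g from rfl, show (fun b => e (σ b)) = (⇑e) ∘ σ from rfl,
        Set.range_comp, Set.range_comp, hσr]
    rw [this, ← Set.image_univ]
    exact MeasurableSet.univ.analyticSet_image (e.measurable.comp σcont.measurable)
  have hCG : @MeasurableSpace.CountablyGenerated Y (⨆ n, 𝓕 n) := by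
    rw [← hf0comap]
    exact MeasurableSpace.CountablyGenerated.comap _
  refine ⟨⟨hCG, fun y => e (g y), hf0comap, hf0range⟩, ?_⟩
  -- Part 2
  intro μn hprob hcons
  -- consistency for all pairs of indices
  have hconsist : ∀ k n, k ≤ n → ∀ s : Set Y, MeasurableSet[𝓕 k] s → μn n s = μn k s := by
    intro k n hkn
    induction n, hkn using Nat.le_induction with
    | base => intro s _; rfl
    | succ n hkn ih =>
      intro s hs
      rw [hcons n s (hmono hkn s hs), ih s hs]
  -- the premeasure
  set ρ : Set Y → ℝ≥0∞ := fun s => ⨅ (m : ℕ) (_ : MeasurableSet[𝓕 m] s), μn m s with hρdef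
  have hρ_eq : ∀ {m : ℕ} {s : Set Y}, MeasurableSet[𝓕 m] s → ρ s = μn m s := by
    intro m s hs
    apply le_antisymm
    · exact iInf_le_of_le m (iInf_le _ hs)
    · refine le_iInf fun k => le_iInf fun hk => ?_
      have h1 : μn (max m k) s = μn m s := hconsist m (max m k) (le_max_left _ _) s hs
      have h2 : μn (max m k) s = μn k s := hconsist k (max m k) (le_max_right _ _) s hk
      rw [← h1, h2]
  -- MAIN COMPACTNESS CLAIM
  have hmain : ∀ (s : ℕ → Set Y), (∀ k, MeasurableSet[𝓕 k] (s k)) → Antitone s →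
      ∀ ε : ℝ≥0∞, 0 < ε → ε ≠ ⊤ → (∀ k, ε ≤ μn k (s k)) → (⋂ k, s k).Nonempty := by
    intro s hsm hsa ε hε hεtop hεle
    -- Borel codes for the sets
    have hBex : ∀ k, ∃ B : Set (ℕ → Bool), MeasurableSet B ∧ f k ⁻¹' B = s k := by
      intro k
      have h := hsm k
      rw [← hfE k] at h
      exact MeasurableSpace.measurableSet_comap.mp h
    choose B hBm hBeq using hBex
    -- truncated joint maps
    set G : ℕ → Y → (ℕ → ℕ → Bool) := fun k y i => f (min i k) y with hGdef
    have hGmeas : ∀ k, Measurable[𝓕 k] (G k) := by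
      intro k
      have hcoord : ∀ i : ℕ, Measurable[𝓕 k] (fun y => G k y i) := by
        intro i
        have : Measurable[𝓕 k] (f (min i k)) := by
          rw [measurable_iff_comap_le, hfE (min i k)]
          exact hmono (min_le_right i k)
        exact this
      exact @measurable_pi_lambda Y ℕ (fun _ => ℕ → Bool) (𝓕 k)
        (fun _ => inferInstance) (G k) hcoord
    -- cylinder predicate
    set Cyl : ℕ → Set (ℕ → ℕ → Bool) → Prop :=
      fun k L => ∀ ω ω', (∀ i, i ≤ k → ω i = ω' i) → ω ∈ L → ω' ∈ L with hCyldef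
    have hCylmono : ∀ k L, Cyl k L → Cyl (k+1) L :=
      fun k L h ω ω' hag => h ω ω' (fun i hi => hag i (le_trans hi (Nat.le_succ k)))
    have hCylinter : ∀ k (L L' : Set (ℕ → ℕ → Bool)), Cyl k L → Cyl k L' → Cyl k (L ∩ L') :=
      fun k L L' h h' ω ω' hag hω => ⟨h ω ω' hag hω.1, h' ω ω' hag hω.2⟩
    have hGCyl : ∀ k j (L : Set (ℕ → ℕ → Bool)), k ≤ j → Cyl k L →
        G j ⁻¹' L = G k ⁻¹' L := by
      intro k j L hkj hL
      have hag : ∀ y, ∀ i, i ≤ k → G j y i = G k y i := by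
        intro y i hi
        show f (min i j) y = f (min i k) y
        rw [min_eq_left (hi.trans hkj), min_eq_left hi]
      ext y
      exact ⟨fun hy => hL (G j y) (G k y) (hag y) hy,
             fun hy => hL (G k y) (G j y) (fun i hi => (hag y i hi).symm) hy⟩
    have hgG : ∀ k (L : Set (ℕ → ℕ → Bool)), Cyl k L → g ⁻¹' L = G k ⁻¹' L := by
      intro k L hL
      have hag : ∀ y, ∀ i, i ≤ k → g y i = G k y i := by
        intro y i hi
        show f i y = f (min i k) y
        rw [min_eq_left hi]
      ext y
      exact ⟨fun hy => hL (g y) (G k y) (hag y) hy,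
             fun hy => hL (G k y) (g y) (fun i hi => (hag y i hi).symm) hy⟩
    -- the range of `G k` is inside the `k`-th cylinder over `R k`
    have hrangeG : ∀ k, Set.range (G k) ⊆ (π k) ⁻¹' (R k) := by
      rintro k _ ⟨y, rfl⟩
      have : π k (G k y) = H k y := by
        funext i
        show f (min (i : ℕ) k) y = f i y
        rw [min_eq_left (Nat.lt_succ_iff.mp i.isLt)]
      show π k (G k y) ∈ R k
      rw [this]
      exact ⟨y, rfl⟩
    -- cylinders over the Borel codes
    set Bt : ℕ → Set (ℕ → ℕ → Bool) := fun k => (fun ω => ω k) ⁻¹' (B k) with hBtdef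
    have hBtm : ∀ k, MeasurableSet (Bt k) := fun k => (measurable_pi_apply k) (hBm k)
    have hBtCyl : ∀ k, Cyl k (Bt k) := by
      intro k ω ω' hag hω
      show ω' k ∈ B k
      rw [← hag k le_rfl]
      exact hω
    have hRCyl : ∀ k, Cyl k ((π k) ⁻¹' (R k)) := by
      intro k ω ω' hag hω
      have : π k ω' = π k ω := by
        funext i
        exact (hag i (Nat.lt_succ_iff.mp i.isLt)).symm
      show π k ω' ∈ R k
      rw [this]
      exact hω
    have hGBt : ∀ k, G k ⁻¹' (Bt k) = s k := by
      intro k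
      rw [← hBeq k]
      ext y
      show f (min k k) y ∈ B k ↔ f k y ∈ B k
      rw [min_self]
    -- the one-step construction
    have build : ∀ (k : ℕ) (Lp : Set (ℕ → ℕ → Bool)), IsCompact Lp → Cyl k Lp →
        ∃ L, IsCompact L ∧ Cyl k L ∧ L ⊆ Lp ∧ L ⊆ (π k) ⁻¹' (R k) ∧ L ⊆ Bt k ∧
          μn k (s k ∩ G k ⁻¹' Lp) ≤ μn k (G k ⁻¹' L) + ε / 2^(k+2) := by
      intro k Lp hLpc hLpcyl
      letI : MeasurableSpace Y := 𝓕 k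
      haveI : IsProbabilityMeasure (μn k) := hprob k
      set Λ : Measure (ℕ → ℕ → Bool) := (μn k).map (G k) with hΛdef
      haveI : IsProbabilityMeasure Λ := Measure.isProbabilityMeasure_map (hGmeas k).aemeasurable
      set A := Bt k ∩ Lp ∩ ((π k) ⁻¹' (R k)) with hAdef2
      have hana : AnalyticSet A :=
        analyticSet_inter (analyticSet_inter (hBtm k).analyticSet
          hLpc.isClosed.measurableSet.analyticSet) ((hRana k).preimage (hπcont k))
      have hδ : (0:ℝ≥0∞) < ε / 2^(k+2) :=
        ENNReal.div_pos hε.ne' (ENNReal.pow_ne_top (by norm_num))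
      obtain ⟨K, hKsub, hKcomp, hKbound⟩ := analytic_inner_compact Λ hana hδ
      -- cylinderize K
      set glue : (ℕ → ℕ → Bool) × (ℕ → ℕ → Bool) → (ℕ → ℕ → Bool) :=
        fun p i => if i ≤ k then p.1 i else p.2 i with hgluedef
      have hgluec : Continuous glue := by
        apply continuous_pi
        intro i
        by_cases h : i ≤ k
        · simp only [hgluedef, if_pos h]
          exact (continuous_apply i).comp continuous_fst
        · simp only [hgluedef, if_neg h]
          exact (continuous_apply i).comp continuous_snd
      set L := glue '' (K ×ˢ (Set.univ : Set (ℕ → ℕ → Bool))) with hLdef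
      have hLc : IsCompact L := (hKcomp.prod isCompact_univ).image hgluec
      have hLcyl : Cyl k L := by
        rintro ω ω' hag ⟨⟨a, b⟩, ⟨ha, _⟩, rfl⟩
        refine ⟨(a, ω'), ⟨ha, Set.mem_univ _⟩, ?_⟩
        funext i
        by_cases h : i ≤ k
        · simp only [hgluedef, if_pos h]
          have h1 : glue (a, b) i = a i := by simp only [hgluedef, if_pos h]
          rw [← hag i h, ← h1]
        · simp only [hgluedef, if_neg h]
      have hKL : K ⊆ L := by
        intro ω hω
        refine ⟨(ω, ω), ⟨hω, Set.mem_univ _⟩, ?_⟩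
        funext i
        by_cases h : i ≤ k <;> simp only [hgluedef, if_pos, if_neg, h, if_true, if_false]
      have hACyl : Cyl k A :=
        hCylinter k _ _ (hCylinter k _ _ (hBtCyl k) hLpcyl) (hRCyl k)
      have hLA : L ⊆ A := by
        rintro _ ⟨⟨a, b⟩, ⟨ha, _⟩, rfl⟩
        apply hACyl a
        · intro i hi
          simp only [hgluedef, if_pos hi]
        · exact hKsub ha
      have hLmeas : MeasurableSet L := hLc.isClosed.measurableSet
      have hBLp_meas : MeasurableSet (Bt k ∩ Lp) :=
        (hBtm k).inter hLpc.isClosed.measurableSet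
      -- measure estimates
      have e1 : μn k (s k ∩ G k ⁻¹' Lp) = Λ (Bt k ∩ Lp) := by
        rw [hΛdef, Measure.map_apply (hGmeas k) hBLp_meas, Set.preimage_inter, hGBt k]
      have e2 : Λ (Bt k ∩ Lp) ≤ Λ A := by
        rw [← map_measure_inter_range (μn k) (hGmeas k) hBLp_meas]
        apply measure_mono
        intro ω hω
        exact ⟨⟨hω.1.1, hω.1.2⟩, hrangeG k hω.2⟩
      have e3 : Λ A ≤ Λ L + ε / 2^(k+2) :=
        le_trans hKbound (add_le_add_left (measure_mono hKL) _)
      have e4 : Λ L = μn k (G k ⁻¹' L) := Measure.map_apply (hGmeas k) hLmeas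
      refine ⟨L, hLc, hLcyl, fun ω hω => (hLA hω).1.2, fun ω hω => (hLA hω).2,
        fun ω hω => (hLA hω).1.1, ?_⟩
      rw [← e4]
      exact le_trans (le_of_eq e1) (le_trans e2 e3)
    -- the invariant
    set P : (k : ℕ) → Set (ℕ → ℕ → Bool) → Prop := fun k L =>
      IsCompact L ∧ Cyl k L ∧ L ⊆ (π k) ⁻¹' (R k) ∧ L ⊆ Bt k ∧
        μn k (s k \ G k ⁻¹' L) ≤ ∑ i ∈ Finset.range (k+1), ε / 2^(i+2) with hPdef
    have meas_t : ∀ k (L : Set (ℕ → ℕ → Bool)), IsCompact L →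
        MeasurableSet[𝓕 k] (G k ⁻¹' L) := by
      intro k L hL
      exact (hGmeas k) hL.isClosed.measurableSet
    -- base case
    have hbase : ∃ L, P 0 L := by
      obtain ⟨L, h1, h2, _, h4, h5, h6⟩ :=
        build 0 Set.univ isCompact_univ (fun ω ω' _ _ => Set.mem_univ ω')
      refine ⟨L, h1, h2, h4, h5, ?_⟩
      letI : MeasurableSpace Y := 𝓕 0
      haveI : IsProbabilityMeasure (μn 0) := hprob 0
      have ht_sub : G 0 ⁻¹' L ⊆ s 0 := by
        rw [← hGBt 0]
        exact Set.preimage_mono h5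
      have hfin : μn 0 (G 0 ⁻¹' L) ≠ ⊤ := measure_ne_top _ _
      rw [Finset.sum_range_one]
      rw [measure_diff ht_sub ((meas_t 0 L h1).nullMeasurableSet) hfin]
      rw [tsub_le_iff_right]
      have h6' : μn 0 (s 0) ≤ μn 0 (G 0 ⁻¹' L) + ε / 2^2 := by simpa using h6
      exact h6'.trans (le_of_eq (add_comm _ _))
    -- inductive step
    have hsucc : ∀ (k : ℕ) (L : Set (ℕ → ℕ → Bool)), P k L →
        ∃ L', P (k+1) L' ∧ L' ⊆ L := by
      intro k L hPL
      obtain ⟨hc, hcyl, hRs, hBs, hInv⟩ := hPL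
      obtain ⟨L', h1, h2, h3, h4, h5, h6⟩ := build (k+1) L hc (hCylmono k L hcyl)
      refine ⟨L', ⟨h1, h2, h4, h5, ?_⟩, h3⟩
      letI : MeasurableSpace Y := 𝓕 (k+1)
      haveI : IsProbabilityMeasure (μn (k+1)) := hprob (k+1)
      set t' := G (k+1) ⁻¹' L' with ht'def
      set tL := G (k+1) ⁻¹' L with htLdef
      have htLk : tL = G k ⁻¹' L := hGCyl k (k+1) L (Nat.le_succ k) hcyl
      have ht'sub : t' ⊆ s (k+1) ∩ tL := by
        intro y hy
        exact ⟨by rw [← hGBt (k+1)]; exact Set.preimage_mono h5 hy, Set.preimage_mono h3 hy⟩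
      have hsplit : s (k+1) \ t' ⊆ (s (k+1) \ tL) ∪ ((s (k+1) ∩ tL) \ t') := by
        intro y hy
        by_cases h : y ∈ tL
        · exact Or.inr ⟨⟨hy.1, h⟩, hy.2⟩
        · exact Or.inl ⟨hy.1, h⟩
      have hm1 : μn (k+1) (s (k+1) \ tL) ≤ ∑ i ∈ Finset.range (k+1), ε / 2^(i+2) := by
        have hsub2 : s (k+1) \ tL ⊆ s k \ G k ⁻¹' L := by
          rw [htLk]
          exact Set.diff_subset_diff_left (hsa (Nat.le_succ k))
        have hmeas2 : MeasurableSet[𝓕 k] (s k \ G k ⁻¹' L) :=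
          MeasurableSet.diff (hsm k) (meas_t k L hc)
        calc μn (k+1) (s (k+1) \ tL) ≤ μn (k+1) (s k \ G k ⁻¹' L) := measure_mono hsub2
          _ = μn k (s k \ G k ⁻¹' L) := hconsist k (k+1) (Nat.le_succ k) _ hmeas2
          _ ≤ _ := hInv
      have hm2 : μn (k+1) ((s (k+1) ∩ tL) \ t') ≤ ε / 2^(k+3) := by
        have hmeast' : MeasurableSet[𝓕 (k+1)] t' := meas_t (k+1) L' h1
        have hfin : μn (k+1) t' ≠ ⊤ := measure_ne_top _ _
        rw [measure_diff ht'sub hmeast'.nullMeasurableSet hfin, tsub_le_iff_right]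
        calc μn (k+1) (s (k+1) ∩ tL) ≤ μn (k+1) t' + ε / 2^(k+1+2) := h6
          _ = ε / 2^(k+3) + μn (k+1) t' := by rw [add_comm]
      calc μn (k+1) (s (k+1) \ t')
          ≤ μn (k+1) ((s (k+1) \ tL) ∪ ((s (k+1) ∩ tL) \ t')) := measure_mono hsplit
        _ ≤ μn (k+1) (s (k+1) \ tL) + μn (k+1) ((s (k+1) ∩ tL) \ t') := measure_union_le _ _
        _ ≤ (∑ i ∈ Finset.range (k+1), ε / 2^(i+2)) + ε / 2^(k+3) := add_le_add hm1 hm2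
        _ = ∑ i ∈ Finset.range (k+2), ε / 2^(i+2) := (Finset.sum_range_succ _ _).symm
    -- the sequence of compact cylinders
    let T : (k : ℕ) → {L : Set (ℕ → ℕ → Bool) // P k L} := fun k =>
      Nat.rec ⟨hbase.choose, hbase.choose_spec⟩
        (fun k prev => ⟨(hsucc k prev.1 prev.2).choose, (hsucc k prev.1 prev.2).choose_spec.1⟩) k
    have hchain : ∀ k, (T (k+1)).1 ⊆ (T k).1 := fun k =>
      (hsucc k (T k).1 (T k).2).choose_spec.2
    have hTne : ∀ k, (T k).1.Nonempty := by
      intro k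
      letI : MeasurableSpace Y := 𝓕 k
      haveI : IsProbabilityMeasure (μn k) := hprob k
      obtain ⟨hc, hcyl, hRs, hBs, hInv⟩ := (T k).2
      by_contra hemp
      rw [Set.not_nonempty_iff_eq_empty] at hemp
      have ht : G k ⁻¹' (T k).1 = ∅ := by rw [hemp]; simp
      have h1 : ε ≤ μn k (s k) := hεle k
      have h2 : μn k (s k) ≤ ε / 2 := by
        have : s k \ G k ⁻¹' (T k).1 = s k := by rw [ht]; simp
        calc μn k (s k) = μn k (s k \ G k ⁻¹' (T k).1) := by rw [this]
          _ ≤ ∑ i ∈ Finset.range (k+1), ε / 2^(i+2) := hInv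
          _ ≤ ε / 2 := auxGeom2 ε (k+1)
      exact absurd (lt_of_le_of_lt (h1.trans h2) (ENNReal.half_lt_self hε.ne' hεtop))
        (lt_irrefl _)
    obtain ⟨ω, hω⟩ := IsCompact.nonempty_iInter_of_sequence_nonempty_isCompact_isClosed
      (fun k => (T k).1) hchain hTne (T 0).2.1 (fun k => (T k).2.1.isClosed)
    have hωR : ∀ n, ∃ z, ∀ i : Fin (n+1), f i z = ω i := by
      intro n
      have hmem : ω ∈ (π n) ⁻¹' (R n) := (T n).2.2.2.1 (Set.mem_iInter.mp hω n)
      obtain ⟨z, hz⟩ := hmem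
      exact ⟨z, fun i => congrFun hz i⟩
    obtain ⟨y, hy⟩ := hlift ω hωR
    refine ⟨y, Set.mem_iInter.mpr fun k => ?_⟩
    have hωB : ω ∈ Bt k := (T k).2.2.2.2.1 (Set.mem_iInter.mp hω k)
    rw [← hBeq k]
    show f k y ∈ B k
    rw [hy k]
    exact hωB
  -- continuity at ∅ for ρ
  have hρ0 : ∀ u : ℕ → Set Y, Antitone u → (∀ k, ∃ m, MeasurableSet[𝓕 m] (u k)) →
      (⋂ k, u k) = ∅ → (⨅ k, ρ (u k)) = 0 := by
    intro u hu hum hui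
    by_contra h0
    have hεpos : 0 < ⨅ k, ρ (u k) := pos_iff_ne_zero.mpr h0
    set ε := ⨅ k, ρ (u k) with hεdef
    choose m hm using hum
    have hε1 : ε ≤ 1 := by
      haveI : IsProbabilityMeasure (μn (m 0)) := hprob (m 0)
      calc ε ≤ ρ (u 0) := iInf_le _ 0
        _ = μn (m 0) (u 0) := hρ_eq (hm 0)
        _ ≤ 1 := prob_le_one
    have hεtop : ε ≠ ⊤ := by
      intro h
      rw [h] at hε1
      simp at hε1
    set KK : ℕ → ℕ := fun j => Nat.findGreatest (fun k => m k ≤ j) j with hKKdef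
    set t : ℕ → Set Y := fun j => if m (KK j) ≤ j then u (KK j) else Set.univ with htdef
    have htm : ∀ j, MeasurableSet[𝓕 j] (t j) := by
      intro j
      by_cases h : m (KK j) ≤ j
      · have : t j = u (KK j) := if_pos h
        rw [this]
        exact hmono h _ (hm (KK j))
      · have : t j = Set.univ := if_neg h
        rw [this]
        exact MeasurableSet.univ
    have hta : Antitone t := by
      apply antitone_nat_of_succ_le
      intro j
      by_cases hc : m (KK j) ≤ j
      · have hKKj : KK j ≤ j + 1 :=
          le_trans (Nat.findGreatest_le (P := fun k => m k ≤ j) j) (Nat.le_succ j)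
        have h1 : KK j ≤ KK (j+1) :=
          Nat.le_findGreatest (P := fun k => m k ≤ j + 1) hKKj (hc.trans (Nat.le_succ j))
        have h2 : m (KK (j+1)) ≤ j+1 :=
          Nat.findGreatest_spec (P := fun k => m k ≤ j + 1) hKKj (hc.trans (Nat.le_succ j))
        have e1 : t (j+1) = u (KK (j+1)) := if_pos h2
        have e2 : t j = u (KK j) := if_pos hc
        rw [e1, e2]
        exact hu h1
      · have : t j = Set.univ := if_neg hc
        rw [this]
        exact Set.subset_univ _
    have htb : ∀ j, ε ≤ μn j (t j) := by
      intro j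
      by_cases h : m (KK j) ≤ j
      · have e1 : t j = u (KK j) := if_pos h
        rw [e1]
        calc ε ≤ ρ (u (KK j)) := iInf_le _ (KK j)
          _ = μn j (u (KK j)) := hρ_eq (hmono h _ (hm (KK j)))
      · have e1 : t j = Set.univ := if_neg h
        haveI : IsProbabilityMeasure (μn j) := hprob j
        rw [e1]
        rw [measure_univ]
        exact hε1
    obtain ⟨x, hx⟩ := hmain t htm hta ε hεpos hεtop htb
    have hxall : ∀ k, x ∈ u k := by
      intro k
      have hj1 : k ≤ max k (m k) := le_max_left _ _
      have hj2 : m k ≤ max k (m k) := le_max_right _ _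
      have h2 : m (KK (max k (m k))) ≤ max k (m k) :=
        Nat.findGreatest_spec (P := fun k' => m k' ≤ max k (m k)) hj1 hj2
      have h1 : k ≤ KK (max k (m k)) :=
        Nat.le_findGreatest (P := fun k' => m k' ≤ max k (m k)) hj1 hj2
      have hmem := Set.mem_iInter.mp hx (max k (m k))
      have e1 : t (max k (m k)) = u (KK (max k (m k))) := if_pos h2
      rw [e1] at hmem
      exact hu h1 hmem
    have : x ∈ ⋂ k, u k := Set.mem_iInter.mpr hxall
    rw [hui] at this
    exact this
  -- construct the measure via Carathéodory
  have hρempty : ρ ∅ = 0 := by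
    have h := hρ_eq (m := 0) (s := ∅) (@MeasurableSet.empty Y (𝓕 0))
    rw [h]
    exact measure_empty
  set OM := OuterMeasure.ofFunction ρ hρempty with hOMdef
  have hρmono : ∀ {m : ℕ} {s u : Set Y}, MeasurableSet[𝓕 m] s → s ⊆ u → ρ s ≤ ρ u := by
    intro m s u hs hsu
    refine le_iInf fun k => le_iInf fun hk => ?_
    rw [hρ_eq hs]
    have h1 : μn (max m k) s = μn m s := hconsist m (max m k) (le_max_left _ _) s hs
    have h2 : μn (max m k) u = μn k u := hconsist k (max m k) (le_max_right _ _) u hk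
    rw [← h1, ← h2]
    exact measure_mono hsu
  have hcover : ∀ {n : ℕ} {s : Set Y}, MeasurableSet[𝓕 n] s → ∀ (t : ℕ → Set Y),
      s ⊆ ⋃ i, t i → μn n s ≤ ∑' i, ρ (t i) := by
    intro n s hs t hst
    by_cases hfin : ∀ i, ρ (t i) ≠ ⊤
    · have hex : ∀ i, ∃ mi, MeasurableSet[𝓕 mi] (t i) := by
        intro i
        by_contra hcon
        push_neg at hcon
        apply hfin i
        rw [hρdef]
        simp only [iInf_eq_top]
        intro mi hmi
        exact absurd hmi (hcon mi)
      choose mm hmm using hex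
      set u : ℕ → Set Y := fun k => s \ ⋃ (i : ℕ) (_ : i < k), t i with hudef
      have hua : Antitone u := by
        intro j j' hjj
        apply Set.diff_subset_diff_right
        exact Set.biUnion_subset_biUnion_left (fun i hi => lt_of_lt_of_le hi hjj)
      have hum : ∀ k, ∃ M, MeasurableSet[𝓕 M] (u k) := by
        intro k
        refine ⟨max n (Finset.sup (Finset.range k) mm), MeasurableSet.diff
          (hmono (le_max_left _ _) _ hs) ?_⟩
        apply MeasurableSet.biUnion (Set.to_countable _)
        intro i hi
        have h1 : mm i ≤ Finset.sup (Finset.range k) mm :=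
          Finset.le_sup (Finset.mem_range.mpr hi)
        exact hmono (h1.trans (le_max_right _ _)) _ (hmm i)
      have hui : (⋂ k, u k) = ∅ := by
        ext x
        simp only [Set.mem_iInter, Set.mem_empty_iff_false, iff_false]
        intro hxall
        obtain ⟨i, hi⟩ := Set.mem_iUnion.mp (hst (hxall 0).1)
        apply (hxall (i+1)).2
        exact Set.mem_biUnion (Nat.lt_succ_self i) hi
      have h0 := hρ0 u hua hum hui
      have hk : ∀ k, μn n s ≤ ρ (u k) + ∑' i, ρ (t i) := by
        intro k
        obtain ⟨M, hM⟩ := hum k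
        set MM := max (max n M) (Finset.sup (Finset.range k) mm) with hMMdef
        have hnM : n ≤ MM := le_trans (le_max_left n M) (le_max_left _ _)
        have hsM : MeasurableSet[𝓕 MM] s := hmono hnM _ hs
        have huM : MeasurableSet[𝓕 MM] (u k) :=
          hmono (le_trans (le_max_right n M) (le_max_left _ _)) _ hM
        have htMi : ∀ i, i < k → MeasurableSet[𝓕 MM] (t i) := fun i hi =>
          hmono (le_trans (Finset.le_sup (Finset.mem_range.mpr hi)) (le_max_right _ _)) _ (hmm i)
        have hsub : s ⊆ u k ∪ ⋃ (i : ℕ) (_ : i < k), t i := by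
          intro x hxs
          by_cases h : x ∈ ⋃ (i : ℕ) (_ : i < k), t i
          · exact Or.inr h
          · exact Or.inl ⟨hxs, h⟩
        letI : MeasurableSpace Y := 𝓕 MM
        have hbu : (⋃ (i : ℕ) (_ : i < k), t i) = ⋃ i ∈ Finset.range k, t i := by
          simp [Finset.mem_range]
        calc μn n s = μn MM s := (hconsist n MM hnM s hs).symm
          _ ≤ μn MM (u k) + μn MM (⋃ (i : ℕ) (_ : i < k), t i) :=
              le_trans (measure_mono hsub) (measure_union_le _ _)
          _ ≤ μn MM (u k) + ∑ i ∈ Finset.range k, μn MM (t i) := by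
              rw [hbu]
              exact add_le_add_right (measure_biUnion_finset_le _ _) _
          _ = ρ (u k) + ∑ i ∈ Finset.range k, ρ (t i) := by
              rw [hρ_eq huM]
              congr 1
              refine Finset.sum_congr rfl fun i hi => ?_
              rw [hρ_eq (htMi i (Finset.mem_range.mp hi))]
          _ ≤ ρ (u k) + ∑' i, ρ (t i) := add_le_add_right (ENNReal.sum_le_tsum _) _
      have hfinal : μn n s ≤ (⨅ k, ρ (u k)) + ∑' i, ρ (t i) := by
        rw [ENNReal.iInf_add]
        exact le_iInf (fun k => hk k)
      rwa [h0, zero_add] at hfinal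
    · push_neg at hfin
      obtain ⟨i, hi⟩ := hfin
      have h1 : (⊤:ℝ≥0∞) ≤ ∑' i, ρ (t i) := by rw [← hi]; exact ENNReal.le_tsum i
      exact le_trans le_top h1
  have hcar : (⨆ n, 𝓕 n) ≤ OM.caratheodory := by
    refine iSup_le fun n => ?_
    rw [MeasurableSpace.le_def]
    intro u hu
    apply OuterMeasure.ofFunction_caratheodory
    intro v
    rcases eq_or_ne (ρ v) ⊤ with hv | hv
    · rw [hv]; exact le_top
    · have hex : ∃ mv, MeasurableSet[𝓕 mv] v := by
        by_contra hcon
        push_neg at hcon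
        apply hv
        rw [hρdef]
        simp only [iInf_eq_top]
        intro mv hmv
        exact absurd hmv (hcon mv)
      obtain ⟨mv, hmv⟩ := hex
      set MM := max mv n with hMMdef
      have hvM : MeasurableSet[𝓕 MM] v := hmono (le_max_left _ _) _ hmv
      have huM : MeasurableSet[𝓕 MM] u := hmono (le_max_right _ _) _ hu
      letI : MeasurableSpace Y := 𝓕 MM
      rw [hρ_eq (hvM.inter huM), hρ_eq (hvM.diff huM), hρ_eq hvM]
      exact le_of_eq (measure_inter_add_diff v huM)
  set μFinal : @Measure Y (⨆ n, 𝓕 n) := @OuterMeasure.toMeasure Y (⨆ n, 𝓕 n) OM hcar with hμFdef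
  have happ : ∀ n (s : Set Y), MeasurableSet[𝓕 n] s → μFinal s = μn n s := by
    intro n s hs
    have hs' : MeasurableSet[⨆ n, 𝓕 n] s := by
      have hle : 𝓕 n ≤ ⨆ n, 𝓕 n := le_iSup 𝓕 n
      rw [MeasurableSpace.le_def] at hle
      exact hle s hs
    have h1 : μFinal s = OM s := @MeasureTheory.toMeasure_apply Y (⨆ n, 𝓕 n) OM hcar s hs'
    rw [h1]
    apply le_antisymm
    · rw [← hρ_eq hs]
      exact OuterMeasure.ofFunction_le s
    · rw [hOMdef, OuterMeasure.ofFunction_apply]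
      refine le_iInf fun t => le_iInf fun hcov => hcover hs t hcov
  refine ⟨μFinal, ?_, fun n s hs => happ n s hs⟩
  refine @IsProbabilityMeasure.mk Y (⨆ n, 𝓕 n) μFinal ?_
  rw [happ 0 Set.univ MeasurableSet.univ]
  haveI := hprob 0
  exact measure_univ
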